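/- Let H be a separable Hilbert space, L a closed subspace with orthogonal projection P, and L_n closed subspaces with projections P_n. If ‖P_n x − x‖ → ‖P x − x‖ for all x, then for each x, ‖P x − P_n x‖² = ‖P x − x‖² + o(1) − ‖P_n x − x‖², hence P_n x → P x. -/

import Mathlib

open Filter

/-- Nontrivial direction: if `‖Pₙ x − x‖ → ‖P x − x‖` for all `x`, then the
orthogonal projections converge strongly: `Pₙ x → P x` for every `x`. -/
theorem strong_convergence_of_projections_of_wijsman {H : Type*}
    [NormedAddCommGroup H] [InnerProductSpace ℝ H] [CompleteSpace H]
    [TopologicalSpace.SeparableSpace H]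
    (L : Submodule ℝ H) (Ln : ℕ → Submodule ℝ H)
    (hL : IsClosed (L : Set H)) (hLn : ∀ n, IsClosed ((Ln n : Submodule ℝ H) : Set H))
    (P : H → H) (Pn : ℕ → H → H)
    (hP : ∀ x, P x ∈ L ∧ x - P x ∈ Lᗮ)
    (hPn : ∀ n x, Pn n x ∈ Ln n ∧ x - Pn n x ∈ (Ln n)ᗮ)
    (h : ∀ x, Tendsto (fun n => ‖Pn n x - x‖) atTop (nhds ‖P x - x‖)) :
    ∀ x, Tendsto (fun n => Pn n x) atTop (nhds (P x)) := by
  intro x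
  -- P (P x) = P x
  have hPP : P (P x) = P x := by
    have hv : P x - P (P x) ∈ Lᗮ := (hP (P x)).2
    have hv' : P x - P (P x) ∈ L := Submodule.sub_mem L (hP x).1 (hP (P x)).1
    have : (inner ℝ (P x - P (P x)) (P x - P (P x)) : ℝ) = 0 :=
      (Submodule.mem_orthogonal L _).mp hv _ hv'
    have := inner_self_eq_zero.mp this
    rw [sub_eq_zero] at this
    exact this.symm
  set a : ℕ → H := fun n => Pn n (P x) with ha
  -- a n → P x
  have h1 : Tendsto a atTop (nhds (P x)) := by
    have := h (P x)
    rw [hPP, sub_self, norm_zero] at this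
    exact tendsto_iff_norm_sub_tendsto_zero.mpr (by simpa using this)
  -- Pythagoras : for y ∈ Ln n, ‖y - x‖² = ‖y - Pn n x‖² + ‖Pn n x - x‖²
  have hpyth : ∀ n, ‖a n - x‖ ^ 2 = ‖a n - Pn n x‖ ^ 2 + ‖Pn n x - x‖ ^ 2 := by
    intro n
    have hmem : a n - Pn n x ∈ Ln n := Submodule.sub_mem _ (hPn n (P x)).1 (hPn n x).1
    have horth : (inner ℝ (a n - Pn n x) (Pn n x - x) : ℝ) = 0 := by
      have h0 : (inner ℝ (a n - Pn n x) (x - Pn n x) : ℝ) = 0 := by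
        exact (Submodule.mem_orthogonal (Ln n) _).mp (hPn n x).2 _ hmem
      rw [show Pn n x - x = -(x - Pn n x) by abel, inner_neg_right, h0, neg_zero]
    have hsum : a n - x = (a n - Pn n x) + (Pn n x - x) := by abel
    rw [hsum, norm_add_sq_real, horth]
    ring
  -- ‖a n - Pn n x‖² → 0
  have h2 : Tendsto (fun n => ‖a n - Pn n x‖ ^ 2) atTop (nhds 0) := by
    have hax : Tendsto (fun n => ‖a n - x‖ ^ 2) atTop (nhds (‖P x - x‖ ^ 2)) := by
      have := (h1.sub_const x).norm
      exact this.pow 2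
    have hpx : Tendsto (fun n => ‖Pn n x - x‖ ^ 2) atTop (nhds (‖P x - x‖ ^ 2)) :=
      (h x).pow 2
    have := hax.sub hpx
    rw [sub_self] at this
    refine this.congr fun n => ?_
    rw [hpyth n]; ring
  have h3 : Tendsto (fun n => ‖a n - Pn n x‖) atTop (nhds 0) := by
    have := (Real.continuous_sqrt.tendsto 0).comp h2
    simpa [Function.comp_def, Real.sqrt_sq_eq_abs, abs_norm, Real.sqrt_zero] using this
  -- conclude
  have h4 : Tendsto (fun n => a n - Pn n x) atTop (nhds 0) :=
    tendsto_zero_iff_norm_tendsto_zero.mpr h3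
  have := h1.sub h4
  simpa using this
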